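/- Let m ≥ 3 be odd, n = (3^m-1)/2. Suppose C is a ternary linear code of length n whose dual C^⊥ has minimum distance 4 and such that the supports of the weight-4 codewords of C^⊥ form the blocks of a Steiner system S(2,4,n), with every block supporting exactly 2 codewords of weight 4 (a codeword and its negative). Then for any two distinct coordinate positions t_1, t_2, the punctured code (C^⊥)^{{t_1,t_2}} satisfies A_1 = 0 and A_2 = 2. -/
import Mathlib

/-- Hamming weight of a vector over `ZMod 3`, indexed by any finite type. -/
def hammingWt {ι : Type*} [Fintype ι] (c : ι → ZMod 3) : ℕ :=
  (Finset.univ.filter fun j => c j ≠ 0).card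

/-- Support of a vector over `ZMod 3`. -/
def hammingSupp {n : ℕ} (c : Fin n → ZMod 3) : Finset (Fin n) :=
  Finset.univ.filter fun j => c j ≠ 0

lemma punct_wt {n : ℕ} (t₁ t₂ : Fin n) (y : Fin n → ZMod 3) :
    hammingWt (fun j : {j : Fin n // j ≠ t₁ ∧ j ≠ t₂} => y j.val)
      = (hammingSupp y \ {t₁, t₂}).card := by
  classical
  unfold hammingWt hammingSupp
  apply Finset.card_bij (fun j _ => j.1)
  · intro a ha
    simp only [Finset.mem_filter, Finset.mem_univ, true_and] at ha
    simp only [Finset.mem_sdiff, Finset.mem_filter, Finset.mem_univ, true_and,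
      Finset.mem_insert, Finset.mem_singleton]
    exact ⟨ha, by rintro (h | h) <;> [exact a.2.1 h; exact a.2.2 h]⟩
  · intro a _ b _ h; exact Subtype.ext h
  · intro b hb
    simp only [Finset.mem_sdiff, Finset.mem_filter, Finset.mem_univ, true_and,
      Finset.mem_insert, Finset.mem_singleton, not_or] at hb
    exact ⟨⟨b, hb.2⟩, by simp [hb.1], rfl⟩

lemma wt_neg {ι : Type*} [Fintype ι] (c : ι → ZMod 3) : hammingWt (-c) = hammingWt c := by
  unfold hammingWt
  congr 1
  ext j
  simp

lemma supp_card {n : ℕ} (y : Fin n → ZMod 3) : (hammingSupp y).card = hammingWt y := rfl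

theorem stmt_11 (m : ℕ) (hm : 3 ≤ m) (hodd : Odd m) (n : ℕ) (hn : n = (3 ^ m - 1) / 2)
    (C D : Submodule (ZMod 3) (Fin n → ZMod 3))
    (hD : ∀ y, y ∈ D ↔ ∀ x ∈ C, ∑ j, x j * y j = 0)
    (hmin : ∀ y ∈ D, y ≠ 0 → 4 ≤ hammingWt y)
    (hex : ∃ y ∈ D, hammingWt y = 4)
    (hSteiner : ∀ t₁ t₂ : Fin n, t₁ ≠ t₂ → ∃! S : Finset (Fin n),
      (∃ y ∈ D, hammingWt y = 4 ∧ hammingSupp y = S) ∧ t₁ ∈ S ∧ t₂ ∈ S)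
    (hpair : ∀ y ∈ D, ∀ y' ∈ D, hammingWt y = 4 → hammingWt y' = 4 →
      hammingSupp y = hammingSupp y' → y' = y ∨ y' = -y)
    (t₁ t₂ : Fin n) (ht : t₁ ≠ t₂) :
    Nat.card {z : (D.map (LinearMap.funLeft (ZMod 3) (ZMod 3)
        (Subtype.val : {j : Fin n // j ≠ t₁ ∧ j ≠ t₂} → Fin n))) //
      hammingWt (z : {j : Fin n // j ≠ t₁ ∧ j ≠ t₂} → ZMod 3) = 1} = 0 ∧
    Nat.card {z : (D.map (LinearMap.funLeft (ZMod 3) (ZMod 3)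
        (Subtype.val : {j : Fin n // j ≠ t₁ ∧ j ≠ t₂} → Fin n))) //
      hammingWt (z : {j : Fin n // j ≠ t₁ ∧ j ≠ t₂} → ZMod 3) = 2} = 2 := by
  classical
  have hcard2 : ({t₁, t₂} : Finset (Fin n)).card = 2 := by
    rw [Finset.card_insert_of_notMem (by simpa using ht), Finset.card_singleton]
  -- general bound: wt y ≤ wt (punctured y) + 2
  have hbound : ∀ y : Fin n → ZMod 3,
      hammingWt y ≤ hammingWt (fun j : {j : Fin n // j ≠ t₁ ∧ j ≠ t₂} => y j.val) + 2 := by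
    intro y
    rw [punct_wt, ← supp_card, ← hcard2]
    exact Finset.card_le_card_sdiff_add_card
  -- A₁ = 0
  have hA1 : IsEmpty {z : (D.map (LinearMap.funLeft (ZMod 3) (ZMod 3)
        (Subtype.val : {j : Fin n // j ≠ t₁ ∧ j ≠ t₂} → Fin n))) //
      hammingWt (z : {j : Fin n // j ≠ t₁ ∧ j ≠ t₂} → ZMod 3) = 1} := by
    constructor
    rintro ⟨⟨z, hz⟩, hw⟩
    obtain ⟨y, hyD, rfl⟩ := hz
    have hw' : (hammingWt fun j : {j : Fin n // j ≠ t₁ ∧ j ≠ t₂} => y j.val) = 1 := hw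
    have hy0 : y ≠ 0 := by
      rintro rfl
      simp [hammingWt] at hw'
    have h4 := hmin y hyD hy0
    have hb := hbound y
    omega
  refine ⟨Nat.card_of_isEmpty, ?_⟩
  -- get the block through t₁, t₂
  obtain ⟨S₀, ⟨⟨y₀, hy₀D, hwt₀, hsupp₀⟩, ht₁S, ht₂S⟩, huniq⟩ := hSteiner t₁ t₂ ht
  subst hsupp₀
  have hsub : ({t₁, t₂} : Finset (Fin n)) ⊆ hammingSupp y₀ := by
    intro j hj
    rcases Finset.mem_insert.mp hj with rfl | hj
    · exact ht₁S
    · rw [Finset.mem_singleton] at hj; subst hj; exact ht₂S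
  -- punctured y₀ has weight 2
  have hwz₀ : hammingWt (fun j : {j : Fin n // j ≠ t₁ ∧ j ≠ t₂} => y₀ j.val) = 2 := by
    rw [punct_wt, Finset.card_sdiff_of_subset hsub, hcard2, supp_card, hwt₀]
  -- main classification
  have hkey : ∀ y ∈ D, hammingWt (fun j : {j : Fin n // j ≠ t₁ ∧ j ≠ t₂} => y j.val) = 2 →
      y = y₀ ∨ y = -y₀ := by
    intro y hyD hw
    have hy0 : y ≠ 0 := by
      rintro rfl
      simp [hammingWt] at hw
    have hmin' := hmin y hyD hy0
    have hub := hbound y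
    rw [hw] at hub
    have hwty : hammingWt y = 4 := le_antisymm hub hmin'
    -- t₁ and t₂ are in the support of y
    have hmem : ∀ t ∈ ({t₁, t₂} : Finset (Fin n)), t ∈ hammingSupp y := by
      by_contra hc
      push_neg at hc
      obtain ⟨t, htm, htn⟩ := hc
      have hsub2 : hammingSupp y ⊆ (hammingSupp y \ {t₁, t₂}) ∪ (({t₁, t₂} : Finset (Fin n)).erase t) := by
        intro j hj
        by_cases hjt : j ∈ ({t₁, t₂} : Finset (Fin n))
        · refine Finset.mem_union_right _ (Finset.mem_erase.mpr ⟨?_, hjt⟩)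
          rintro rfl; exact htn hj
        · exact Finset.mem_union_left _ (Finset.mem_sdiff.mpr ⟨hj, hjt⟩)
      have h0 := Finset.card_le_card hsub2
      have h1 := Finset.card_union_le (hammingSupp y \ {t₁, t₂}) (({t₁, t₂} : Finset (Fin n)).erase t)
      have h2 : (({t₁, t₂} : Finset (Fin n)).erase t).card = 1 := by
        rw [Finset.card_erase_of_mem htm, hcard2]
      have h3 : (hammingSupp y \ {t₁, t₂}).card = 2 := by rw [← punct_wt, hw]
      have h5 : (hammingSupp y).card = 4 := by rw [supp_card, hwty]
      omega
    -- the support of y is the unique block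
    have hSeq : hammingSupp y = hammingSupp y₀ :=
      huniq (hammingSupp y) ⟨⟨y, hyD, hwty, rfl⟩,
        hmem t₁ (by simp), hmem t₂ (by simp)⟩
    exact hpair y₀ hy₀D y hyD hwt₀ hwty hSeq.symm
  -- set up the two elements
  set φ := LinearMap.funLeft (ZMod 3) (ZMod 3)
      (Subtype.val : {j : Fin n // j ≠ t₁ ∧ j ≠ t₂} → Fin n) with hφ
  set z₀ : {j : Fin n // j ≠ t₁ ∧ j ≠ t₂} → ZMod 3 := fun j => y₀ j.val with hz₀def
  have hz₀mem : z₀ ∈ D.map φ := ⟨y₀, hy₀D, rfl⟩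
  have hz₀mem' : -z₀ ∈ D.map φ := neg_mem hz₀mem
  have hz₀ne : z₀ ≠ -z₀ := by
    intro h
    have h2 : hammingWt z₀ = 2 := hwz₀
    have : ∃ j, z₀ j ≠ 0 := by
      by_contra hc
      push_neg at hc
      have : z₀ = 0 := funext hc
      rw [this] at h2
      simp [hammingWt] at h2
    obtain ⟨j, hj⟩ := this
    have heq := congrFun h j
    simp only [Pi.neg_apply] at heq
    have hval : ∀ a : ZMod 3, a = -a → a = 0 := by decide
    exact hj (hval _ heq)
  rw [Nat.card_eq_two_iff]
  refine ⟨⟨⟨z₀, hz₀mem⟩, hwz₀⟩, ⟨⟨-z₀, hz₀mem'⟩, (wt_neg z₀).trans hwz₀⟩, ?_, ?_⟩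
  · intro h
    apply hz₀ne
    exact congrArg (fun x => (x.1 : {j : Fin n // j ≠ t₁ ∧ j ≠ t₂} → ZMod 3)) h
  · ext ⟨⟨z, hz⟩, hw⟩
    simp only [Set.mem_insert_iff, Set.mem_singleton_iff, Set.mem_univ, iff_true]
    obtain ⟨y, hyD, rfl⟩ := hz
    have hw' : (hammingWt fun j : {j : Fin n // j ≠ t₁ ∧ j ≠ t₂} => y j.val) = 2 := hw
    rcases hkey y hyD hw' with hy | hy
    · left
      apply Subtype.ext
      apply Subtype.ext
      show φ y = z₀
      rw [hy]; rfl
    · right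
      apply Subtype.ext
      apply Subtype.ext
      show φ y = -z₀
      rw [hy]; rfl
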